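/- Let c₄₀, c₃₁, c₂₂, c₁₃, c₀₄ be real numbers. Define f(x,y) = y² + x³ + c₄₀x⁴ + c₃₁x³y + c₂₂x²y² + c₁₃xy³ + c₀₄y⁴ and g(x,y) = y² + x³ + c₄₀x⁴ + c₁₃xy³. Set q₁(x,y,z) = x − (1/3)c₂₂z, q₂(x,y,z) = y + (1/2)c₃₁z, q₃(x,y,z) = z, and p(x,y,z) = 1 + c₃₁y + (c₀₄ + (1/4)c₃₁²)z. Then the function (x,y) ↦ q₃(x,y,g(x,y))/p(x,y,g(x,y)) − f(q₁(x,y,g(x,y))/p(x,y,g(x,y)), q₂(x,y,g(x,y))/p(x,y,g(x,y))) is o(‖(x,y)‖⁴) as (x,y) → (0,0). Hence the 4-jets of the Monge forms z = f and z = g at the origin are projectively equivalent. -/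

import Mathlib

open Asymptotics Filter

set_option maxHeartbeats 4000000

lemma mono_littleO (a b : ℕ) (h : a + b = 5) :
    (fun P : ℝ × ℝ => P.1 ^ a * P.2 ^ b) =o[nhds (0 : ℝ × ℝ)] (fun P => ‖P‖ ^ 4) := by
  rw [isLittleO_iff]
  intro ε hε
  have hball : ∀ᶠ P : ℝ × ℝ in nhds 0, ‖P‖ < ε := by
    filter_upwards [Metric.ball_mem_nhds (0 : ℝ × ℝ) hε] with P hP
    simpa [dist_eq_norm] using hP
  filter_upwards [hball] with P hP
  have h1 : ‖P.1‖ ≤ ‖P‖ := norm_fst_le P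
  have h2 : ‖P.2‖ ≤ ‖P‖ := norm_snd_le P
  have hn : (0:ℝ) ≤ ‖P‖ := norm_nonneg P
  calc ‖P.1 ^ a * P.2 ^ b‖ = ‖P.1‖ ^ a * ‖P.2‖ ^ b := by
        rw [norm_mul, norm_pow, norm_pow]
    _ ≤ ‖P‖ ^ a * ‖P‖ ^ b := by
        have ha := pow_le_pow_left₀ (norm_nonneg P.1) h1 a
        have hb := pow_le_pow_left₀ (norm_nonneg P.2) h2 b
        exact mul_le_mul ha hb (by positivity) (by positivity)
    _ = ‖P‖ * ‖P‖ ^ 4 := by rw [← pow_add, h]; ring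
    _ ≤ ε * ‖P‖ ^ 4 := by
        have := pow_nonneg hn 4
        nlinarith
    _ ≤ ε * ‖(fun P : ℝ × ℝ => ‖P‖ ^ 4) P‖ := by
        simp [abs_of_nonneg (pow_nonneg hn 4), Real.norm_eq_abs]

lemma term_littleO (a b : ℕ) (h : a + b = 5) {A : ℝ × ℝ → ℝ} (hA : Continuous A) :
    (fun P : ℝ × ℝ => P.1 ^ a * P.2 ^ b * A P) =o[nhds (0 : ℝ × ℝ)] (fun P => ‖P‖ ^ 4) := by
  have hO : A =O[nhds (0 : ℝ × ℝ)] (fun _ => (1 : ℝ)) :=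
    (hA.tendsto 0).isBigO_one ℝ
  have := (mono_littleO a b h).mul_isBigO hO
  simpa using this

noncomputable def bA_0 (c40 c31 c22 c13 c04 x y : ℝ) : ℝ :=
  (1) * c22 + (2) * x * c04 + (-1/4) * x * c31 ^ 2 + (7/3) * x * c40 * c22 + (-1/3) * x ^ 2 * c22 ^ 2 + (5) * x ^ 2 * c40 * c04 + (1/4) * x ^ 2 * c40 * c31 ^ 2 + (4/3) * x ^ 2 * c40 ^ 2 * c22 + (1) * x ^ 3 * c22 * c04 + (1/2) * x ^ 3 * c31 ^ 2 * c22 + (-4/3) * x ^ 3 * c40 * c22 ^ 2 + (3) * x ^ 3 * c40 ^ 2 * c04 + (1/2) * x ^ 3 * c40 ^ 2 * c31 ^ 2 + (3) * x ^ 4 * c04 ^ 2 + (1/27) * x ^ 4 * c22 ^ 3 + (1) * x ^ 4 * c31 ^ 2 * c04 + (1/16) * x ^ 4 * c31 ^ 4 + (2) * x ^ 4 * c40 * c22 * c04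

noncomputable def bA_1 (c40 c31 c22 c13 c04 x y : ℝ) : ℝ :=
  (1) * x ^ 4 * c40 * c31 ^ 2 * c22 + (-5/3) * x ^ 4 * c40 ^ 2 * c22 ^ 2 + (-1/3) * x ^ 5 * c22 ^ 2 * c04 + (-1/12) * x ^ 5 * c31 ^ 2 * c22 ^ 2 + (-1/8) * x ^ 5 * c31 ^ 3 * c13 + (9) * x ^ 5 * c40 * c04 ^ 2 + (7/27) * x ^ 5 * c40 * c22 ^ 3 + (3) * x ^ 5 * c40 * c31 ^ 2 * c04 + (3/16) * x ^ 5 * c40 * c31 ^ 4 + (1) * x ^ 5 * c40 ^ 2 * c22 * c04 + (1/2) * x ^ 5 * c40 ^ 2 * c31 ^ 2 * c22 + (-2/3) * x ^ 5 * c40 ^ 3 * c22 ^ 2 + (-1) * x ^ 6 * c40 * c22 ^ 2 * c04 + (-1/4) * x ^ 6 * c40 * c31 ^ 2 * c22 ^ 2 + (-3/8) * x ^ 6 * c40 * c31 ^ 3 * c13 + (9) * x ^ 6 * c40 ^ 2 * c04 ^ 2 + (5/9) * x ^ 6 * c40 ^ 2 * c22 ^ 3 + (3) * x ^ 6 * c40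 ^ 2 * c31 ^ 2 * c04

noncomputable def bA_2 (c40 c31 c22 c13 c04 x y : ℝ) : ℝ :=
  (3/16) * x ^ 6 * c40 ^ 2 * c31 ^ 4 + (1) * x ^ 7 * c04 ^ 3 + (1/27) * x ^ 7 * c22 ^ 3 * c04 + (1/2) * x ^ 7 * c31 ^ 2 * c04 ^ 2 + (1/24) * x ^ 7 * c31 ^ 3 * c22 * c13 + (-1/81) * x ^ 7 * c40 * c22 ^ 4 + (-1) * x ^ 7 * c40 ^ 2 * c22 ^ 2 * c04 + (-1/4) * x ^ 7 * c40 ^ 2 * c31 ^ 2 * c22 ^ 2 + (-3/8) * x ^ 7 * c40 ^ 2 * c31 ^ 3 * c13 + (3) * x ^ 7 * c40 ^ 3 * c04 ^ 2 + (13/27) * x ^ 7 * c40 ^ 3 * c22 ^ 3 + (1) * x ^ 7 * c40 ^ 3 * c31 ^ 2 * c04 + (1/16) * x ^ 7 * c40 ^ 3 * c31 ^ 4 + (4) * x ^ 8 * c40 * c04 ^ 3 + (4/27) * x ^ 8 * c40 * c22 ^ 3 * c04 + (2) * x ^ 8 * c40 * c31 ^ 2 * c04 ^ 2 + (1/6)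 * x ^ 8 * c40 * c31 ^ 3 * c22 * c13 + (-4/81) * x ^ 8 * c40 ^ 2 * c22 ^ 4

noncomputable def bA_3 (c40 c31 c22 c13 c04 x y : ℝ) : ℝ :=
  (-1/3) * x ^ 8 * c40 ^ 3 * c22 ^ 2 * c04 + (-1/12) * x ^ 8 * c40 ^ 3 * c31 ^ 2 * c22 ^ 2 + (-1/8) * x ^ 8 * c40 ^ 3 * c31 ^ 3 * c13 + (4/27) * x ^ 8 * c40 ^ 4 * c22 ^ 3 + (6) * x ^ 9 * c40 ^ 2 * c04 ^ 3 + (2/9) * x ^ 9 * c40 ^ 2 * c22 ^ 3 * c04 + (3) * x ^ 9 * c40 ^ 2 * c31 ^ 2 * c04 ^ 2 + (1/4) * x ^ 9 * c40 ^ 2 * c31 ^ 3 * c22 * c13 + (-2/27) * x ^ 9 * c40 ^ 3 * c22 ^ 4 + (4) * x ^ 10 * c40 ^ 3 * c04 ^ 3 + (4/27) * x ^ 10 * c40 ^ 3 * c22 ^ 3 * c04 + (2) * x ^ 10 * c40 ^ 3 * c31 ^ 2 * c04 ^ 2 + (1/6) * x ^ 10 * c40 ^ 3 * c31 ^ 3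 * c22 * c13 + (-4/81) * x ^ 10 * c40 ^ 4 * c22 ^ 4 + (1) * x ^ 11 * c40 ^ 4 * c04 ^ 3 + (1/27) * x ^ 11 * c40 ^ 4 * c22 ^ 3 * c04 + (1/2) * x ^ 11 * c40 ^ 4 * c31 ^ 2 * c04 ^ 2 + (1/24) * x ^ 11 * c40 ^ 4 * c31 ^ 3 * c22 * c13

noncomputable def bA_4 (c40 c31 c22 c13 c04 x y : ℝ) : ℝ :=
  (-1/81) * x ^ 11 * c40 ^ 5 * c22 ^ 4

noncomputable def bA (c40 c31 c22 c13 c04 x y : ℝ) : ℝ :=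
  bA_0 c40 c31 c22 c13 c04 x y + bA_1 c40 c31 c22 c13 c04 x y + bA_2 c40 c31 c22 c13 c04 x y + bA_3 c40 c31 c22 c13 c04 x y + bA_4 c40 c31 c22 c13 c04 x y

noncomputable def bB_0 (c40 c31 c22 c13 c04 x y : ℝ) : ℝ :=
  (2) * c40 * c31 + (1) * x * c31 * c22 + (4) * x ^ 2 * c31 * c04 + (1/2) * x ^ 2 * c31 ^ 3 + (1) * x ^ 2 * c40 * c31 * c22 + (-3/4) * x ^ 3 * c31 ^ 2 * c13 + (8) * x ^ 3 * c40 * c31 * c04 + (1) * x ^ 3 * c40 * c31 ^ 3 + (-3/2) * x ^ 4 * c40 * c31 ^ 2 * c13 + (4) * x ^ 4 * c40 ^ 2 * c31 * c04 + (1/2) * x ^ 4 * c40 ^ 2 * c31 ^ 3 + (2) * x ^ 5 * c31 * c04 ^ 2 + (-1/27) * x ^ 5 * c31 * c22 ^ 3 + (1/4) * x ^ 5 * c31 ^ 2 * c22 * c13 + (-3/4) * x ^ 5 * c40 ^ 2 * c31 ^ 2 * c13 + (6) * x ^ 6 * c40 * c31 * c04 ^ 2 + (-1/9) * x ^ 6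 * c40 * c31 * c22 ^ 3 + (3/4) * x ^ 6 * c40 * c31 ^ 2 * c22 * c13

noncomputable def bB_1 (c40 c31 c22 c13 c04 x y : ℝ) : ℝ :=
  (6) * x ^ 7 * c40 ^ 2 * c31 * c04 ^ 2 + (-1/9) * x ^ 7 * c40 ^ 2 * c31 * c22 ^ 3 + (3/4) * x ^ 7 * c40 ^ 2 * c31 ^ 2 * c22 * c13 + (2) * x ^ 8 * c40 ^ 3 * c31 * c04 ^ 2 + (-1/27) * x ^ 8 * c40 ^ 3 * c31 * c22 ^ 3 + (1/4) * x ^ 8 * c40 ^ 3 * c31 ^ 2 * c22 * c13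

noncomputable def bB (c40 c31 c22 c13 c04 x y : ℝ) : ℝ :=
  bB_0 c40 c31 c22 c13 c04 x y + bB_1 c40 c31 c22 c13 c04 x y

noncomputable def bC_0 (c40 c31 c22 c13 c04 x y : ℝ) : ℝ :=
  (3) * c04 + (3/4) * c31 ^ 2 + (4/3) * c40 * c22 + (-3/2) * x * c31 * c13 + (4) * x * c40 * c04 + (3/2) * x * c40 * c31 ^ 2 + (2) * x ^ 2 * c22 * c04 + (1) * x ^ 2 * c31 ^ 2 * c22 + (-4/3) * x ^ 2 * c40 * c22 ^ 2 + (-3/2) * x ^ 2 * c40 * c31 * c13 + (8) * x ^ 3 * c04 ^ 2 + (1/2) * x ^ 3 * c31 * c22 * c13 + (2) * x ^ 3 * c31 ^ 2 * c04 + (1/8) * x ^ 3 * c31 ^ 4 + (2) * x ^ 3 * c40 * c22 * c04 + (1) * x ^ 3 * c40 * c31 ^ 2 * c22 + (-4/3) * x ^ 3 * c40 ^ 2 * c22 ^ 2 + (-1) * x ^ 4 * c22 ^ 2 * c04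

noncomputable def bC_1 (c40 c31 c22 c13 c04 x y : ℝ) : ℝ :=
  (-1/4) * x ^ 4 * c31 ^ 2 * c22 ^ 2 + (-3/8) * x ^ 4 * c31 ^ 3 * c13 + (16) * x ^ 4 * c40 * c04 ^ 2 + (4/9) * x ^ 4 * c40 * c22 ^ 3 + (1) * x ^ 4 * c40 * c31 * c22 * c13 + (4) * x ^ 4 * c40 * c31 ^ 2 * c04 + (1/4) * x ^ 4 * c40 * c31 ^ 4 + (-2) * x ^ 5 * c40 * c22 ^ 2 * c04 + (-1/2) * x ^ 5 * c40 * c31 ^ 2 * c22 ^ 2 + (-3/4) * x ^ 5 * c40 * c31 ^ 3 * c13 + (8) * x ^ 5 * c40 ^ 2 * c04 ^ 2 + (8/9) * x ^ 5 * c40 ^ 2 * c22 ^ 3 + (1/2) * x ^ 5 * c40 ^ 2 * c31 * c22 * c13 + (2) * x ^ 5 * c40 ^ 2 * c31 ^ 2 * c04 + (1/8) * x ^ 5 * c40 ^ 2 * c31 ^ 4 + (4) * x ^ 6 * c04 ^ 3 + (4/27) * x ^ 6 * c22 ^ 3 * c04 + (2) * x ^ 6 * c31 ^ 2 * c04 ^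 2

noncomputable def bC_2 (c40 c31 c22 c13 c04 x y : ℝ) : ℝ :=
  (1/6) * x ^ 6 * c31 ^ 3 * c22 * c13 + (-4/81) * x ^ 6 * c40 * c22 ^ 4 + (-1) * x ^ 6 * c40 ^ 2 * c22 ^ 2 * c04 + (-1/4) * x ^ 6 * c40 ^ 2 * c31 ^ 2 * c22 ^ 2 + (-3/8) * x ^ 6 * c40 ^ 2 * c31 ^ 3 * c13 + (4/9) * x ^ 6 * c40 ^ 3 * c22 ^ 3 + (12) * x ^ 7 * c40 * c04 ^ 3 + (4/9) * x ^ 7 * c40 * c22 ^ 3 * c04 + (6) * x ^ 7 * c40 * c31 ^ 2 * c04 ^ 2 + (1/2) * x ^ 7 * c40 * c31 ^ 3 * c22 * c13 + (-4/27) * x ^ 7 * c40 ^ 2 * c22 ^ 4 + (12) * x ^ 8 * c40 ^ 2 * c04 ^ 3 + (4/9) * x ^ 8 * c40 ^ 2 * c22 ^ 3 * c04 + (6) * x ^ 8 * c40 ^ 2 * c31 ^ 2 * c04 ^ 2 + (1/2) * x ^ 8 * c40 ^ 2 * c31 ^ 3 * c22 * c13 + (-4/27) * x ^ 8 * c40 ^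 3 * c22 ^ 4 + (4) * x ^ 9 * c40 ^ 3 * c04 ^ 3 + (4/27) * x ^ 9 * c40 ^ 3 * c22 ^ 3 * c04

noncomputable def bC_3 (c40 c31 c22 c13 c04 x y : ℝ) : ℝ :=
  (2) * x ^ 9 * c40 ^ 3 * c31 ^ 2 * c04 ^ 2 + (1/6) * x ^ 9 * c40 ^ 3 * c31 ^ 3 * c22 * c13 + (-4/81) * x ^ 9 * c40 ^ 4 * c22 ^ 4

noncomputable def bC (c40 c31 c22 c13 c04 x y : ℝ) : ℝ :=
  bC_0 c40 c31 c22 c13 c04 x y + bC_1 c40 c31 c22 c13 c04 x y + bC_2 c40 c31 c22 c13 c04 x y + bC_3 c40 c31 c22 c13 c04 x y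

noncomputable def bD_0 (c40 c31 c22 c13 c04 x y : ℝ) : ℝ :=
  (1) * c31 * c22 + (4/3) * x * c22 * c13 + (4) * x * c31 * c04 + (1/2) * x * c31 ^ 3 + (5) * x ^ 2 * c13 * c04 + (-5/4) * x ^ 2 * c31 ^ 2 * c13 + (5/3) * x ^ 2 * c40 * c22 * c13 + (4) * x ^ 2 * c40 * c31 * c04 + (1/2) * x ^ 2 * c40 * c31 ^ 3 + (-2/3) * x ^ 3 * c22 ^ 2 * c13 + (6) * x ^ 3 * c40 * c13 * c04 + (-1/2) * x ^ 3 * c40 * c31 ^ 2 * c13 + (2) * x ^ 4 * c22 * c13 * c04 + (6) * x ^ 4 * c31 * c04 ^ 2 + (-1/9) * x ^ 4 * c31 * c22 ^ 3 + (7/4) * x ^ 4 * c31 ^ 2 * c22 * c13 + (-2) * x ^ 4 * c40 * c22 ^ 2 * c13 + (9) * x ^ 5 * c13 * c04 ^ 2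

noncomputable def bD_1 (c40 c31 c22 c13 c04 x y : ℝ) : ℝ :=
  (1/9) * x ^ 5 * c22 ^ 3 * c13 + (3) * x ^ 5 * c31 ^ 2 * c13 * c04 + (3/16) * x ^ 5 * c31 ^ 4 * c13 + (2) * x ^ 5 * c40 * c22 * c13 * c04 + (12) * x ^ 5 * c40 * c31 * c04 ^ 2 + (-2/9) * x ^ 5 * c40 * c31 * c22 ^ 3 + (5/2) * x ^ 5 * c40 * c31 ^ 2 * c22 * c13 + (-4/3) * x ^ 5 * c40 ^ 2 * c22 ^ 2 * c13 + (-1) * x ^ 6 * c22 ^ 2 * c13 * c04 + (-1/4) * x ^ 6 * c31 ^ 2 * c22 ^ 2 * c13 + (-3/8) * x ^ 6 * c31 ^ 3 * c13 ^ 2 + (18) * x ^ 6 * c40 * c13 * c04 ^ 2 + (2/3) * x ^ 6 * c40 * c22 ^ 3 * c13 + (6) * x ^ 6 * c40 * c31 ^ 2 * c13 * c04 + (3/8) * x ^ 6 * c40 * c31 ^ 4 * c13 + (6) * x ^ 6 * c40 ^ 2 * c31 * c04 ^ 2 + (-1/9) * x ^ 6 * c40 ^ 2 * c31 * c22 ^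 3 + (3/4) * x ^ 6 * c40 ^ 2 * c31 ^ 2 * c22 * c13

noncomputable def bD_2 (c40 c31 c22 c13 c04 x y : ℝ) : ℝ :=
  (-2) * x ^ 7 * c40 * c22 ^ 2 * c13 * c04 + (-1/2) * x ^ 7 * c40 * c31 ^ 2 * c22 ^ 2 * c13 + (-3/4) * x ^ 7 * c40 * c31 ^ 3 * c13 ^ 2 + (9) * x ^ 7 * c40 ^ 2 * c13 * c04 ^ 2 + (1) * x ^ 7 * c40 ^ 2 * c22 ^ 3 * c13 + (3) * x ^ 7 * c40 ^ 2 * c31 ^ 2 * c13 * c04 + (3/16) * x ^ 7 * c40 ^ 2 * c31 ^ 4 * c13 + (4) * x ^ 8 * c13 * c04 ^ 3 + (4/27) * x ^ 8 * c22 ^ 3 * c13 * c04 + (2) * x ^ 8 * c31 ^ 2 * c13 * c04 ^ 2 + (1/6) * x ^ 8 * c31 ^ 3 * c22 * c13 ^ 2 + (-4/81) * x ^ 8 * c40 * c22 ^ 4 * c13 + (-1) * x ^ 8 * c40 ^ 2 * c22 ^ 2 * c13 * c04 + (-1/4) * x ^ 8 * c40 ^ 2 * c31 ^ 2 * c22 ^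 2 * c13 + (-3/8) * x ^ 8 * c40 ^ 2 * c31 ^ 3 * c13 ^ 2 + (4/9) * x ^ 8 * c40 ^ 3 * c22 ^ 3 * c13 + (12) * x ^ 9 * c40 * c13 * c04 ^ 3 + (4/9) * x ^ 9 * c40 * c22 ^ 3 * c13 * c04

noncomputable def bD_3 (c40 c31 c22 c13 c04 x y : ℝ) : ℝ :=
  (6) * x ^ 9 * c40 * c31 ^ 2 * c13 * c04 ^ 2 + (1/2) * x ^ 9 * c40 * c31 ^ 3 * c22 * c13 ^ 2 + (-4/27) * x ^ 9 * c40 ^ 2 * c22 ^ 4 * c13 + (12) * x ^ 10 * c40 ^ 2 * c13 * c04 ^ 3 + (4/9) * x ^ 10 * c40 ^ 2 * c22 ^ 3 * c13 * c04 + (6) * x ^ 10 * c40 ^ 2 * c31 ^ 2 * c13 * c04 ^ 2 + (1/2) * x ^ 10 * c40 ^ 2 * c31 ^ 3 * c22 * c13 ^ 2 + (-4/27) * x ^ 10 * c40 ^ 3 * c22 ^ 4 * c13 + (4) * x ^ 11 * c40 ^ 3 * c13 * c04 ^ 3 + (4/27) * x ^ 11 * c40 ^ 3 * c22 ^ 3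 * c13 * c04 + (2) * x ^ 11 * c40 ^ 3 * c31 ^ 2 * c13 * c04 ^ 2 + (1/6) * x ^ 11 * c40 ^ 3 * c31 ^ 3 * c22 * c13 ^ 2 + (-4/81) * x ^ 11 * c40 ^ 4 * c22 ^ 4 * c13

noncomputable def bD (c40 c31 c22 c13 c04 x y : ℝ) : ℝ :=
  bD_0 c40 c31 c22 c13 c04 x y + bD_1 c40 c31 c22 c13 c04 x y + bD_2 c40 c31 c22 c13 c04 x y + bD_3 c40 c31 c22 c13 c04 x y

noncomputable def bE_0 (c40 c31 c22 c13 c04 x y : ℝ) : ℝ :=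
  (1/3) * c22 ^ 2 + (1/2) * c31 * c13 + (1) * x * c22 * c04 + (1/2) * x * c31 ^ 2 * c22 + (-2/3) * x * c40 * c22 ^ 2 + (7) * x ^ 2 * c04 ^ 2 + (-1/9) * x ^ 2 * c22 ^ 3 + (2) * x ^ 2 * c31 * c22 * c13 + (1) * x ^ 2 * c31 ^ 2 * c04 + (1/16) * x ^ 2 * c31 ^ 4 + (-1) * x ^ 3 * c22 ^ 2 * c04 + (8) * x ^ 3 * c31 * c13 * c04 + (-1/4) * x ^ 3 * c31 ^ 2 * c22 ^ 2 + (5/8) * x ^ 3 * c31 ^ 3 * c13 + (7) * x ^ 3 * c40 * c04 ^ 2 + (1/3) * x ^ 3 * c40 * c22 ^ 3 + (1) * x ^ 3 * c40 * c31 * c22 * c13 + (1) * x ^ 3 * c40 * c31 ^ 2 * c04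

noncomputable def bE_1 (c40 c31 c22 c13 c04 x y : ℝ) : ℝ :=
  (1/16) * x ^ 3 * c40 * c31 ^ 4 + (-3/2) * x ^ 4 * c31 ^ 2 * c13 ^ 2 + (-1) * x ^ 4 * c40 * c22 ^ 2 * c04 + (8) * x ^ 4 * c40 * c31 * c13 * c04 + (-1/4) * x ^ 4 * c40 * c31 ^ 2 * c22 ^ 2 + (5/8) * x ^ 4 * c40 * c31 ^ 3 * c13 + (4/9) * x ^ 4 * c40 ^ 2 * c22 ^ 3 + (6) * x ^ 5 * c04 ^ 3 + (2/9) * x ^ 5 * c22 ^ 3 * c04 + (3) * x ^ 5 * c31 ^ 2 * c04 ^ 2 + (1/4) * x ^ 5 * c31 ^ 3 * c22 * c13 + (-2/27) * x ^ 5 * c40 * c22 ^ 4 + (-3/2) * x ^ 5 * c40 * c31 ^ 2 * c13 ^ 2 + (6) * x ^ 6 * c31 * c13 * c04 ^ 2 + (-1/9) * x ^ 6 * c31 * c22 ^ 3 * c13 + (3/4) * x ^ 6 * c31 ^ 2 * c22 * c13 ^ 2 + (12) * x ^ 6 * c40 * c04 ^ 3 + (4/9) * x ^ 6 * c40 * c22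 ^ 3 * c04

noncomputable def bE_2 (c40 c31 c22 c13 c04 x y : ℝ) : ℝ :=
  (6) * x ^ 6 * c40 * c31 ^ 2 * c04 ^ 2 + (1/2) * x ^ 6 * c40 * c31 ^ 3 * c22 * c13 + (-4/27) * x ^ 6 * c40 ^ 2 * c22 ^ 4 + (12) * x ^ 7 * c40 * c31 * c13 * c04 ^ 2 + (-2/9) * x ^ 7 * c40 * c31 * c22 ^ 3 * c13 + (3/2) * x ^ 7 * c40 * c31 ^ 2 * c22 * c13 ^ 2 + (6) * x ^ 7 * c40 ^ 2 * c04 ^ 3 + (2/9) * x ^ 7 * c40 ^ 2 * c22 ^ 3 * c04 + (3) * x ^ 7 * c40 ^ 2 * c31 ^ 2 * c04 ^ 2 + (1/4) * x ^ 7 * c40 ^ 2 * c31 ^ 3 * c22 * c13 + (-2/27) * x ^ 7 * c40 ^ 3 * c22 ^ 4 + (6) * x ^ 8 * c40 ^ 2 * c31 * c13 * c04 ^ 2 + (-1/9) * x ^ 8 * c40 ^ 2 * c31 * c22 ^ 3 * c13 + (3/4) * x ^ 8 * c40 ^ 2 * c31 ^ 2 * c22 * c13 ^ 2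

noncomputable def bE (c40 c31 c22 c13 c04 x y : ℝ) : ℝ :=
  bE_0 c40 c31 c22 c13 c04 x y + bE_1 c40 c31 c22 c13 c04 x y + bE_2 c40 c31 c22 c13 c04 x y

noncomputable def bF_0 (c40 c31 c22 c13 c04 x y : ℝ) : ℝ :=
  (1/3) * c22 * c13 + (2) * y * c04 ^ 2 + (-2/27) * y * c22 ^ 3 + (1/2) * y * c31 * c22 * c13 + (2) * y ^ 2 * c31 * c04 ^ 2 + (-1/27) * y ^ 2 * c31 * c22 ^ 3 + (1/4) * y ^ 2 * c31 ^ 2 * c22 * c13 + (1) * y ^ 3 * c04 ^ 3 + (1/27) * y ^ 3 * c22 ^ 3 * c04 + (1/2) * y ^ 3 * c31 ^ 2 * c04 ^ 2 + (1/24) * y ^ 3 * c31 ^ 3 * c22 * c13 + (-1/81) * y ^ 3 * c40 * c22 ^ 4 + (4) * x * c13 * c04 + (3/4) * x * c31 ^ 2 * c13 + (1/3) * x * y * c22 * c13 ^ 2 + (-1/3) * x * y * c22 ^ 2 * c04 + (4) * x * y * c31 * c13 * c04 + (-1/12) * x * y * c31 ^ 2 * c22 ^ 2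

noncomputable def bF_1 (c40 c31 c22 c13 c04 x y : ℝ) : ℝ :=
  (3/8) * x * y * c31 ^ 3 * c13 + (4/27) * x * y * c40 * c22 ^ 3 + (7) * x * y ^ 2 * c13 * c04 ^ 2 + (-1/9) * x * y ^ 2 * c22 ^ 3 * c13 + (1) * x * y ^ 2 * c31 * c22 * c13 ^ 2 + (1) * x * y ^ 2 * c31 ^ 2 * c13 * c04 + (1/16) * x * y ^ 2 * c31 ^ 4 * c13 + (6) * x * y ^ 3 * c31 * c13 * c04 ^ 2 + (-1/9) * x * y ^ 3 * c31 * c22 ^ 3 * c13 + (3/4) * x * y ^ 3 * c31 ^ 2 * c22 * c13 ^ 2 + (4) * x * y ^ 4 * c13 * c04 ^ 3 + (4/27) * x * y ^ 4 * c22 ^ 3 * c13 * c04 + (2) * x * y ^ 4 * c31 ^ 2 * c13 * c04 ^ 2 + (1/6) * x * y ^ 4 * c31 ^ 3 * c22 * c13 ^ 2 + (-4/81) * x * y ^ 4 * c40 * c22 ^ 4 * c13 + (-3/2) * x ^ 2 * c31 * c13 ^ 2 + (3) * x ^ 2 * y * c13 ^ 2 * c04 + (-1) * x ^ 2 * y *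 c31 ^ 2 * c13 ^ 2

noncomputable def bF_2 (c40 c31 c22 c13 c04 x y : ℝ) : ℝ :=
  (-1) * x ^ 2 * y ^ 2 * c22 ^ 2 * c13 * c04 + (4) * x ^ 2 * y ^ 2 * c31 * c13 ^ 2 * c04 + (-1/4) * x ^ 2 * y ^ 2 * c31 ^ 2 * c22 ^ 2 * c13 + (1/8) * x ^ 2 * y ^ 2 * c31 ^ 3 * c13 ^ 2 + (4/9) * x ^ 2 * y ^ 2 * c40 * c22 ^ 3 * c13 + (8) * x ^ 2 * y ^ 3 * c13 ^ 2 * c04 ^ 2 + (1/2) * x ^ 2 * y ^ 3 * c31 * c22 * c13 ^ 3 + (2) * x ^ 2 * y ^ 3 * c31 ^ 2 * c13 ^ 2 * c04 + (1/8) * x ^ 2 * y ^ 3 * c31 ^ 4 * c13 ^ 2 + (6) * x ^ 2 * y ^ 4 * c31 * c13 ^ 2 * c04 ^ 2 + (-1/9) * x ^ 2 * y ^ 4 * c31 * c22 ^ 3 * c13 ^ 2 + (3/4) * x ^ 2 * y ^ 4 * c31 ^ 2 * c22 * c13 ^ 3 + (6) * x ^ 2 * y ^ 5 * c13 ^ 2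 * c04 ^ 3 + (2/9) * x ^ 2 * y ^ 5 * c22 ^ 3 * c13 ^ 2 * c04 + (3) * x ^ 2 * y ^ 5 * c31 ^ 2 * c13 ^ 2 * c04 ^ 2 + (1/4) * x ^ 2 * y ^ 5 * c31 ^ 3 * c22 * c13 ^ 3 + (-2/27) * x ^ 2 * y ^ 5 * c40 * c22 ^ 4 * c13 ^ 2 + (2) * x ^ 3 * c22 * c13 * c04

noncomputable def bF_3 (c40 c31 c22 c13 c04 x y : ℝ) : ℝ :=
  (6) * x ^ 3 * c31 * c04 ^ 2 + (-1/9) * x ^ 3 * c31 * c22 ^ 3 + (7/4) * x ^ 3 * c31 ^ 2 * c22 * c13 + (-4/3) * x ^ 3 * c40 * c22 ^ 2 * c13 + (4) * x ^ 3 * y * c04 ^ 3 + (-1/3) * x ^ 3 * y * c22 ^ 2 * c13 ^ 2 + (4/27) * x ^ 3 * y * c22 ^ 3 * c04 + (2) * x ^ 3 * y * c31 ^ 2 * c04 ^ 2 + (1/6) * x ^ 3 * y * c31 ^ 3 * c22 * c13 + (-4/81) * x ^ 3 * y * c40 * c22 ^ 4 + (-3/4) * x ^ 3 * y ^ 2 *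 c31 ^ 2 * c13 ^ 3 + (-1) * x ^ 3 * y ^ 3 * c22 ^ 2 * c13 ^ 2 * c04 + (-1/4) * x ^ 3 * y ^ 3 * c31 ^ 2 * c22 ^ 2 * c13 ^ 2 + (-3/8) * x ^ 3 * y ^ 3 * c31 ^ 3 * c13 ^ 3 + (4/9) * x ^ 3 * y ^ 3 * c40 * c22 ^ 3 * c13 ^ 2 + (3) * x ^ 3 * y ^ 4 * c13 ^ 3 * c04 ^ 2 + (1/27) * x ^ 3 * y ^ 4 * c22 ^ 3 * c13 ^ 3 + (1) * x ^ 3 * y ^ 4 * c31 ^ 2 * c13 ^ 3 * c04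

noncomputable def bF_4 (c40 c31 c22 c13 c04 x y : ℝ) : ℝ :=
  (1/16) * x ^ 3 * y ^ 4 * c31 ^ 4 * c13 ^ 3 + (2) * x ^ 3 * y ^ 5 * c31 * c13 ^ 3 * c04 ^ 2 + (-1/27) * x ^ 3 * y ^ 5 * c31 * c22 ^ 3 * c13 ^ 3 + (1/4) * x ^ 3 * y ^ 5 * c31 ^ 2 * c22 * c13 ^ 4 + (4) * x ^ 3 * y ^ 6 * c13 ^ 3 * c04 ^ 3 + (4/27) * x ^ 3 * y ^ 6 * c22 ^ 3 * c13 ^ 3 * c04 + (2) * x ^ 3 * y ^ 6 * c31 ^ 2 * c13 ^ 3 * c04 ^ 2 + (1/6) * x ^ 3 * y ^ 6 * c31 ^ 3 * c22 * c13 ^ 4 + (-4/81) * x ^ 3 * y ^ 6 * c40 * c22 ^ 4 * c13 ^ 3 + (16) * x ^ 4 * c13 * c04 ^ 2 + (1) * x ^ 4 * c31 * c22 * c13 ^ 2 + (4) * x ^ 4 * c31 ^ 2 * c13 * c04 + (1/4) * x ^ 4 * c31 ^ 4 * c13 + (6) * x ^ 4 * c40 * c31 * c04 ^ 2 + (-1/9)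 * x ^ 4 * c40 * c31 * c22 ^ 3 + (3/4) * x ^ 4 * c40 * c31 ^ 2 * c22 * c13 + (1) * x ^ 4 * y * c22 * c13 ^ 2 * c04 + (12) * x ^ 4 * y * c31 * c13 * c04 ^ 2

noncomputable def bF_5 (c40 c31 c22 c13 c04 x y : ℝ) : ℝ :=
  (-2/9) * x ^ 4 * y * c31 * c22 ^ 3 * c13 + (2) * x ^ 4 * y * c31 ^ 2 * c22 * c13 ^ 2 + (4) * x ^ 4 * y * c40 * c04 ^ 3 + (-2/3) * x ^ 4 * y * c40 * c22 ^ 2 * c13 ^ 2 + (4/27) * x ^ 4 * y * c40 * c22 ^ 3 * c04 + (2) * x ^ 4 * y * c40 * c31 ^ 2 * c04 ^ 2 + (1/6) * x ^ 4 * y * c40 * c31 ^ 3 * c22 * c13 + (-4/81) * x ^ 4 * y * c40 ^ 2 * c22 ^ 4 + (12) * x ^ 4 * y ^ 2 * c13 * c04 ^ 3 + (4/9) * x ^ 4 * y ^ 2 * c22 ^ 3 * c13 * c04 + (6) * x ^ 4 * y ^ 2 * c31 ^ 2 * c13 * c04 ^ 2 + (1/2) * x ^ 4 * y ^ 2 *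 c31 ^ 3 * c22 * c13 ^ 2 + (-4/27) * x ^ 4 * y ^ 2 * c40 * c22 ^ 4 * c13 + (-1/3) * x ^ 4 * y ^ 4 * c22 ^ 2 * c13 ^ 3 * c04 + (-1/12) * x ^ 4 * y ^ 4 * c31 ^ 2 * c22 ^ 2 * c13 ^ 3 + (-1/8) * x ^ 4 * y ^ 4 * c31 ^ 3 * c13 ^ 4 + (4/27) * x ^ 4 * y ^ 4 * c40 * c22 ^ 3 * c13 ^ 3 + (1) * x ^ 4 * y ^ 7 * c13 ^ 4 * c04 ^ 3

noncomputable def bF_6 (c40 c31 c22 c13 c04 x y : ℝ) : ℝ :=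
  (1/27) * x ^ 4 * y ^ 7 * c22 ^ 3 * c13 ^ 4 * c04 + (1/2) * x ^ 4 * y ^ 7 * c31 ^ 2 * c13 ^ 4 * c04 ^ 2 + (1/24) * x ^ 4 * y ^ 7 * c31 ^ 3 * c22 * c13 ^ 5 + (-1/81) * x ^ 4 * y ^ 7 * c40 * c22 ^ 4 * c13 ^ 4 + (-2) * x ^ 5 * c22 ^ 2 * c13 * c04 + (-1/2) * x ^ 5 * c31 ^ 2 * c22 ^ 2 * c13 + (-3/4) * x ^ 5 * c31 ^ 3 * c13 ^ 2 + (16) * x ^ 5 * c40 * c13 * c04 ^ 2 + (8/9) * x ^ 5 * c40 * c22 ^ 3 * c13 + (1) * x ^ 5 * c40 * c31 * c22 * c13 ^ 2 + (4) * x ^ 5 * c40 * c31 ^ 2 * c13 * c04 + (1/4) * x ^ 5 * c40 * c31 ^ 4 * c13 + (9) * x ^ 5 * y * c13 ^ 2 * c04 ^ 2 + (1/9) * x ^ 5 * y * c22 ^ 3 * c13 ^ 2 + (3) * x ^ 5 * y * c31 ^ 2 * c13 ^ 2 * c04 + (3/16) * x ^ 5 * y * c31 ^ 4 * c13 ^ 2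 + (12) * x ^ 5 * y * c40 * c31 * c13 * c04 ^ 2 + (-2/9) * x ^ 5 * y * c40 * c31 * c22 ^ 3 * c13

noncomputable def bF_7 (c40 c31 c22 c13 c04 x y : ℝ) : ℝ :=
  (3/2) * x ^ 5 * y * c40 * c31 ^ 2 * c22 * c13 ^ 2 + (6) * x ^ 5 * y ^ 2 * c31 * c13 ^ 2 * c04 ^ 2 + (-1/9) * x ^ 5 * y ^ 2 * c31 * c22 ^ 3 * c13 ^ 2 + (3/4) * x ^ 5 * y ^ 2 * c31 ^ 2 * c22 * c13 ^ 3 + (12) * x ^ 5 * y ^ 2 * c40 * c13 * c04 ^ 3 + (4/9) * x ^ 5 * y ^ 2 * c40 * c22 ^ 3 * c13 * c04 + (6) * x ^ 5 * y ^ 2 * c40 * c31 ^ 2 * c13 * c04 ^ 2 + (1/2) * x ^ 5 * y ^ 2 * c40 * c31 ^ 3 * c22 * c13 ^ 2 + (-4/27) * x ^ 5 * y ^ 2 * c40 ^ 2 * c22 ^ 4 * c13 + (12) * x ^ 5 * y ^ 3 * c13 ^ 2 * c04 ^ 3 + (4/9) * x ^ 5 * y ^ 3 * c22 ^ 3 *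 c13 ^ 2 * c04 + (6) * x ^ 5 * y ^ 3 * c31 ^ 2 * c13 ^ 2 * c04 ^ 2 + (1/2) * x ^ 5 * y ^ 3 * c31 ^ 3 * c22 * c13 ^ 3 + (-4/27) * x ^ 5 * y ^ 3 * c40 * c22 ^ 4 * c13 ^ 2 + (-2) * x ^ 6 * c40 * c22 ^ 2 * c13 * c04 + (-1/2) * x ^ 6 * c40 * c31 ^ 2 * c22 ^ 2 * c13 + (-3/4) * x ^ 6 * c40 * c31 ^ 3 * c13 ^ 2 + (8/9) * x ^ 6 * c40 ^ 2 * c22 ^ 3 * c13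

noncomputable def bF_8 (c40 c31 c22 c13 c04 x y : ℝ) : ℝ :=
  (-1) * x ^ 6 * y * c22 ^ 2 * c13 ^ 2 * c04 + (-1/4) * x ^ 6 * y * c31 ^ 2 * c22 ^ 2 * c13 ^ 2 + (-3/8) * x ^ 6 * y * c31 ^ 3 * c13 ^ 3 + (9) * x ^ 6 * y * c40 * c13 ^ 2 * c04 ^ 2 + (5/9) * x ^ 6 * y * c40 * c22 ^ 3 * c13 ^ 2 + (3) * x ^ 6 * y * c40 * c31 ^ 2 * c13 ^ 2 * c04 + (3/16) * x ^ 6 * y * c40 * c31 ^ 4 * c13 ^ 2 + (6) * x ^ 6 * y ^ 2 * c40 * c31 * c13 ^ 2 * c04 ^ 2 + (-1/9) * x ^ 6 * y ^ 2 * c40 * c31 * c22 ^ 3 * c13 ^ 2 + (3/4) * x ^ 6 * y ^ 2 * c40 * c31 ^ 2 * c22 * c13 ^ 3 + (12) * x ^ 6 * y ^ 3 * c40 * c13 ^ 2 * c04 ^ 3 + (4/9) * x ^ 6 * y ^ 3 * c40 * c22 ^ 3 * c13 ^ 2 * c04 + (6) * x ^ 6 * y ^ 3 * c40 * c31 ^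 2 * c13 ^ 2 * c04 ^ 2 + (1/2) * x ^ 6 * y ^ 3 * c40 * c31 ^ 3 * c22 * c13 ^ 3 + (-4/27) * x ^ 6 * y ^ 3 * c40 ^ 2 * c22 ^ 4 * c13 ^ 2 + (4) * x ^ 6 * y ^ 4 * c13 ^ 3 * c04 ^ 3 + (4/27) * x ^ 6 * y ^ 4 * c22 ^ 3 * c13 ^ 3 * c04 + (2) * x ^ 6 * y ^ 4 * c31 ^ 2 * c13 ^ 3 * c04 ^ 2

noncomputable def bF_9 (c40 c31 c22 c13 c04 x y : ℝ) : ℝ :=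
  (1/6) * x ^ 6 * y ^ 4 * c31 ^ 3 * c22 * c13 ^ 4 + (-4/81) * x ^ 6 * y ^ 4 * c40 * c22 ^ 4 * c13 ^ 3 + (12) * x ^ 7 * c13 * c04 ^ 3 + (4/9) * x ^ 7 * c22 ^ 3 * c13 * c04 + (6) * x ^ 7 * c31 ^ 2 * c13 * c04 ^ 2 + (1/2) * x ^ 7 * c31 ^ 3 * c22 * c13 ^ 2 + (-4/27) * x ^ 7 * c40 * c22 ^ 4 * c13 + (-1) * x ^ 7 * y * c40 * c22 ^ 2 * c13 ^ 2 * c04 + (-1/4) * x ^ 7 * y * c40 * c31 ^ 2 * c22 ^ 2 * c13 ^ 2 + (-3/8) * x ^ 7 * y * c40 * c31 ^ 3 * c13 ^ 3 + (4/9) * x ^ 7 * y * c40 ^ 2 * c22 ^ 3 * c13 ^ 2 + (4) * x ^ 7 * y ^ 4 * c40 * c13 ^ 3 * c04 ^ 3 + (4/27) * x ^ 7 * y ^ 4 * c40 * c22 ^ 3 * c13 ^ 3 * c04 + (2) * x ^ 7 * y ^ 4 * c40 * c31 ^ 2 * c13 ^ 3 * c04 ^ 2 + (1/6) * x ^ 7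 * y ^ 4 * c40 * c31 ^ 3 * c22 * c13 ^ 4 + (-4/81) * x ^ 7 * y ^ 4 * c40 ^ 2 * c22 ^ 4 * c13 ^ 3 + (24) * x ^ 8 * c40 * c13 * c04 ^ 3 + (8/9) * x ^ 8 * c40 * c22 ^ 3 * c13 * c04

noncomputable def bF_10 (c40 c31 c22 c13 c04 x y : ℝ) : ℝ :=
  (12) * x ^ 8 * c40 * c31 ^ 2 * c13 * c04 ^ 2 + (1) * x ^ 8 * c40 * c31 ^ 3 * c22 * c13 ^ 2 + (-8/27) * x ^ 8 * c40 ^ 2 * c22 ^ 4 * c13 + (6) * x ^ 8 * y * c13 ^ 2 * c04 ^ 3 + (2/9) * x ^ 8 * y * c22 ^ 3 * c13 ^ 2 * c04 + (3) * x ^ 8 * y * c31 ^ 2 * c13 ^ 2 * c04 ^ 2 + (1/4) * x ^ 8 * y * c31 ^ 3 * c22 * c13 ^ 3 + (-2/27) * x ^ 8 * y * c40 * c22 ^ 4 * c13 ^ 2 + (12) * x ^ 9 * c40 ^ 2 * c13 * c04 ^ 3 + (4/9) * x ^ 9 * c40 ^ 2 * c22 ^ 3 * c13 * c04 + (6) *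 x ^ 9 * c40 ^ 2 * c31 ^ 2 * c13 * c04 ^ 2 + (1/2) * x ^ 9 * c40 ^ 2 * c31 ^ 3 * c22 * c13 ^ 2 + (-4/27) * x ^ 9 * c40 ^ 3 * c22 ^ 4 * c13 + (12) * x ^ 9 * y * c40 * c13 ^ 2 * c04 ^ 3 + (4/9) * x ^ 9 * y * c40 * c22 ^ 3 * c13 ^ 2 * c04 + (6) * x ^ 9 * y * c40 * c31 ^ 2 * c13 ^ 2 * c04 ^ 2 + (1/2) * x ^ 9 * y * c40 * c31 ^ 3 * c22 * c13 ^ 3 + (-4/27) * x ^ 9 * y * c40 ^ 2 * c22 ^ 4 * c13 ^ 2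

noncomputable def bF_11 (c40 c31 c22 c13 c04 x y : ℝ) : ℝ :=
  (6) * x ^ 10 * y * c40 ^ 2 * c13 ^ 2 * c04 ^ 3 + (2/9) * x ^ 10 * y * c40 ^ 2 * c22 ^ 3 * c13 ^ 2 * c04 + (3) * x ^ 10 * y * c40 ^ 2 * c31 ^ 2 * c13 ^ 2 * c04 ^ 2 + (1/4) * x ^ 10 * y * c40 ^ 2 * c31 ^ 3 * c22 * c13 ^ 3 + (-2/27) * x ^ 10 * y * c40 ^ 3 * c22 ^ 4 * c13 ^ 2

noncomputable def bF (c40 c31 c22 c13 c04 x y : ℝ) : ℝ :=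
  bF_0 c40 c31 c22 c13 c04 x y + bF_1 c40 c31 c22 c13 c04 x y + bF_2 c40 c31 c22 c13 c04 x y + bF_3 c40 c31 c22 c13 c04 x y + bF_4 c40 c31 c22 c13 c04 x y + bF_5 c40 c31 c22 c13 c04 x y + bF_6 c40 c31 c22 c13 c04 x y + bF_7 c40 c31 c22 c13 c04 x y + bF_8 c40 c31 c22 c13 c04 x y + bF_9 c40 c31 c22 c13 c04 x y + bF_10 c40 c31 c22 c13 c04 x y + bF_11 c40 c31 c22 c13 c04 x y

lemma bA_0_cont (c40 c31 c22 c13 c04 : ℝ) :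
    Continuous (fun P : ℝ × ℝ => bA_0 c40 c31 c22 c13 c04 P.1 P.2) := by
  unfold bA_0; fun_prop

lemma bA_1_cont (c40 c31 c22 c13 c04 : ℝ) :
    Continuous (fun P : ℝ × ℝ => bA_1 c40 c31 c22 c13 c04 P.1 P.2) := by
  unfold bA_1; fun_prop

lemma bA_2_cont (c40 c31 c22 c13 c04 : ℝ) :
    Continuous (fun P : ℝ × ℝ => bA_2 c40 c31 c22 c13 c04 P.1 P.2) := by
  unfold bA_2; fun_prop

lemma bA_3_cont (c40 c31 c22 c13 c04 : ℝ) :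
    Continuous (fun P : ℝ × ℝ => bA_3 c40 c31 c22 c13 c04 P.1 P.2) := by
  unfold bA_3; fun_prop

lemma bA_4_cont (c40 c31 c22 c13 c04 : ℝ) :
    Continuous (fun P : ℝ × ℝ => bA_4 c40 c31 c22 c13 c04 P.1 P.2) := by
  unfold bA_4; fun_prop

lemma bA_cont (c40 c31 c22 c13 c04 : ℝ) :
    Continuous (fun P : ℝ × ℝ => bA c40 c31 c22 c13 c04 P.1 P.2) := by
  unfold bA
  exact (bA_0_cont c40 c31 c22 c13 c04) |>.add (bA_1_cont c40 c31 c22 c13 c04) |>.add (bA_2_cont c40 c31 c22 c13 c04) |>.add (bA_3_cont c40 c31 c22 c13 c04) |>.add (bA_4_cont c40 c31 c22 c13 c04)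

lemma bB_0_cont (c40 c31 c22 c13 c04 : ℝ) :
    Continuous (fun P : ℝ × ℝ => bB_0 c40 c31 c22 c13 c04 P.1 P.2) := by
  unfold bB_0; fun_prop

lemma bB_1_cont (c40 c31 c22 c13 c04 : ℝ) :
    Continuous (fun P : ℝ × ℝ => bB_1 c40 c31 c22 c13 c04 P.1 P.2) := by
  unfold bB_1; fun_prop

lemma bB_cont (c40 c31 c22 c13 c04 : ℝ) :
    Continuous (fun P : ℝ × ℝ => bB c40 c31 c22 c13 c04 P.1 P.2) := by
  unfold bB
  exact (bB_0_cont c40 c31 c22 c13 c04) |>.add (bB_1_cont c40 c31 c22 c13 c04)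

lemma bC_0_cont (c40 c31 c22 c13 c04 : ℝ) :
    Continuous (fun P : ℝ × ℝ => bC_0 c40 c31 c22 c13 c04 P.1 P.2) := by
  unfold bC_0; fun_prop

lemma bC_1_cont (c40 c31 c22 c13 c04 : ℝ) :
    Continuous (fun P : ℝ × ℝ => bC_1 c40 c31 c22 c13 c04 P.1 P.2) := by
  unfold bC_1; fun_prop

lemma bC_2_cont (c40 c31 c22 c13 c04 : ℝ) :
    Continuous (fun P : ℝ × ℝ => bC_2 c40 c31 c22 c13 c04 P.1 P.2) := by
  unfold bC_2; fun_prop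

lemma bC_3_cont (c40 c31 c22 c13 c04 : ℝ) :
    Continuous (fun P : ℝ × ℝ => bC_3 c40 c31 c22 c13 c04 P.1 P.2) := by
  unfold bC_3; fun_prop

lemma bC_cont (c40 c31 c22 c13 c04 : ℝ) :
    Continuous (fun P : ℝ × ℝ => bC c40 c31 c22 c13 c04 P.1 P.2) := by
  unfold bC
  exact (bC_0_cont c40 c31 c22 c13 c04) |>.add (bC_1_cont c40 c31 c22 c13 c04) |>.add (bC_2_cont c40 c31 c22 c13 c04) |>.add (bC_3_cont c40 c31 c22 c13 c04)

lemma bD_0_cont (c40 c31 c22 c13 c04 : ℝ) :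
    Continuous (fun P : ℝ × ℝ => bD_0 c40 c31 c22 c13 c04 P.1 P.2) := by
  unfold bD_0; fun_prop

lemma bD_1_cont (c40 c31 c22 c13 c04 : ℝ) :
    Continuous (fun P : ℝ × ℝ => bD_1 c40 c31 c22 c13 c04 P.1 P.2) := by
  unfold bD_1; fun_prop

lemma bD_2_cont (c40 c31 c22 c13 c04 : ℝ) :
    Continuous (fun P : ℝ × ℝ => bD_2 c40 c31 c22 c13 c04 P.1 P.2) := by
  unfold bD_2; fun_prop

lemma bD_3_cont (c40 c31 c22 c13 c04 : ℝ) :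
    Continuous (fun P : ℝ × ℝ => bD_3 c40 c31 c22 c13 c04 P.1 P.2) := by
  unfold bD_3; fun_prop

lemma bD_cont (c40 c31 c22 c13 c04 : ℝ) :
    Continuous (fun P : ℝ × ℝ => bD c40 c31 c22 c13 c04 P.1 P.2) := by
  unfold bD
  exact (bD_0_cont c40 c31 c22 c13 c04) |>.add (bD_1_cont c40 c31 c22 c13 c04) |>.add (bD_2_cont c40 c31 c22 c13 c04) |>.add (bD_3_cont c40 c31 c22 c13 c04)

lemma bE_0_cont (c40 c31 c22 c13 c04 : ℝ) :
    Continuous (fun P : ℝ × ℝ => bE_0 c40 c31 c22 c13 c04 P.1 P.2) := by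
  unfold bE_0; fun_prop

lemma bE_1_cont (c40 c31 c22 c13 c04 : ℝ) :
    Continuous (fun P : ℝ × ℝ => bE_1 c40 c31 c22 c13 c04 P.1 P.2) := by
  unfold bE_1; fun_prop

lemma bE_2_cont (c40 c31 c22 c13 c04 : ℝ) :
    Continuous (fun P : ℝ × ℝ => bE_2 c40 c31 c22 c13 c04 P.1 P.2) := by
  unfold bE_2; fun_prop

lemma bE_cont (c40 c31 c22 c13 c04 : ℝ) :
    Continuous (fun P : ℝ × ℝ => bE c40 c31 c22 c13 c04 P.1 P.2) := by
  unfold bE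
  exact (bE_0_cont c40 c31 c22 c13 c04) |>.add (bE_1_cont c40 c31 c22 c13 c04) |>.add (bE_2_cont c40 c31 c22 c13 c04)

lemma bF_0_cont (c40 c31 c22 c13 c04 : ℝ) :
    Continuous (fun P : ℝ × ℝ => bF_0 c40 c31 c22 c13 c04 P.1 P.2) := by
  unfold bF_0; fun_prop

lemma bF_1_cont (c40 c31 c22 c13 c04 : ℝ) :
    Continuous (fun P : ℝ × ℝ => bF_1 c40 c31 c22 c13 c04 P.1 P.2) := by
  unfold bF_1; fun_prop

lemma bF_2_cont (c40 c31 c22 c13 c04 : ℝ) :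
    Continuous (fun P : ℝ × ℝ => bF_2 c40 c31 c22 c13 c04 P.1 P.2) := by
  unfold bF_2; fun_prop

lemma bF_3_cont (c40 c31 c22 c13 c04 : ℝ) :
    Continuous (fun P : ℝ × ℝ => bF_3 c40 c31 c22 c13 c04 P.1 P.2) := by
  unfold bF_3; fun_prop

lemma bF_4_cont (c40 c31 c22 c13 c04 : ℝ) :
    Continuous (fun P : ℝ × ℝ => bF_4 c40 c31 c22 c13 c04 P.1 P.2) := by
  unfold bF_4; fun_prop

lemma bF_5_cont (c40 c31 c22 c13 c04 : ℝ) :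
    Continuous (fun P : ℝ × ℝ => bF_5 c40 c31 c22 c13 c04 P.1 P.2) := by
  unfold bF_5; fun_prop

lemma bF_6_cont (c40 c31 c22 c13 c04 : ℝ) :
    Continuous (fun P : ℝ × ℝ => bF_6 c40 c31 c22 c13 c04 P.1 P.2) := by
  unfold bF_6; fun_prop

lemma bF_7_cont (c40 c31 c22 c13 c04 : ℝ) :
    Continuous (fun P : ℝ × ℝ => bF_7 c40 c31 c22 c13 c04 P.1 P.2) := by
  unfold bF_7; fun_prop

lemma bF_8_cont (c40 c31 c22 c13 c04 : ℝ) :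
    Continuous (fun P : ℝ × ℝ => bF_8 c40 c31 c22 c13 c04 P.1 P.2) := by
  unfold bF_8; fun_prop

lemma bF_9_cont (c40 c31 c22 c13 c04 : ℝ) :
    Continuous (fun P : ℝ × ℝ => bF_9 c40 c31 c22 c13 c04 P.1 P.2) := by
  unfold bF_9; fun_prop

lemma bF_10_cont (c40 c31 c22 c13 c04 : ℝ) :
    Continuous (fun P : ℝ × ℝ => bF_10 c40 c31 c22 c13 c04 P.1 P.2) := by
  unfold bF_10; fun_prop

lemma bF_11_cont (c40 c31 c22 c13 c04 : ℝ) :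
    Continuous (fun P : ℝ × ℝ => bF_11 c40 c31 c22 c13 c04 P.1 P.2) := by
  unfold bF_11; fun_prop

lemma bF_cont (c40 c31 c22 c13 c04 : ℝ) :
    Continuous (fun P : ℝ × ℝ => bF c40 c31 c22 c13 c04 P.1 P.2) := by
  unfold bF
  exact (bF_0_cont c40 c31 c22 c13 c04) |>.add (bF_1_cont c40 c31 c22 c13 c04) |>.add (bF_2_cont c40 c31 c22 c13 c04) |>.add (bF_3_cont c40 c31 c22 c13 c04) |>.add (bF_4_cont c40 c31 c22 c13 c04) |>.add (bF_5_cont c40 c31 c22 c13 c04) |>.add (bF_6_cont c40 c31 c22 c13 c04) |>.add (bF_7_cont c40 c31 c22 c13 c04) |>.add (bF_8_cont c40 c31 c22 c13 c04) |>.add (bF_9_cont c40 c31 c22 c13 c04) |>.add (bF_10_cont c40 c31 c22 c13 c04) |>.add (bF_11_cont c40 c31 c22 c13 c04)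


lemma quot (c40 c31 c22 c13 c04 z A B pp N : ℝ) (hp : pp ≠ 0)
    (hN : N = z * pp ^ 3 - B ^ 2 * pp ^ 2 - A ^ 3 * pp
      - (c40 * A ^ 4 + c31 * A ^ 3 * B + c22 * A ^ 2 * B ^ 2 + c13 * A * B ^ 3 + c04 * B ^ 4)) :
    N * (pp ^ 4)⁻¹ =
      z / pp - ((B / pp) ^ 2 + (A / pp) ^ 3 + c40 * (A / pp) ^ 4 + c31 * (A / pp) ^ 3 * (B / pp)
        + c22 * (A / pp) ^ 2 * (B / pp) ^ 2 + c13 * (A / pp) * (B / pp) ^ 3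
        + c04 * (B / pp) ^ 4) := by
  subst hN; field_simp; ring

noncomputable def pf (c40 c31 c13 c04 : ℝ) (P : ℝ × ℝ) : ℝ :=
  1 + c31 * P.2 + (c04 + (1/4) * c31 ^ 2) *
    (P.2 ^ 2 + P.1 ^ 3 + c40 * P.1 ^ 4 + c13 * P.1 * P.2 ^ 3)

lemma pf_cont (c40 c31 c13 c04 : ℝ) : Continuous (pf c40 c31 c13 c04) := by
  unfold pf; fun_prop

/-- the 4-jets of the Monge forms `z = f` and `z = g` at the origin are
projectively equivalent via the explicit projective transformation `(q₁/p, q₂/p, q₃/p)`. -/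
theorem stmt1 (c40 c31 c22 c13 c04 : ℝ) :
    let f : ℝ → ℝ → ℝ := fun x y =>
      y ^ 2 + x ^ 3 + c40 * x ^ 4 + c31 * x ^ 3 * y + c22 * x ^ 2 * y ^ 2
        + c13 * x * y ^ 3 + c04 * y ^ 4
    let g : ℝ → ℝ → ℝ := fun x y => y ^ 2 + x ^ 3 + c40 * x ^ 4 + c13 * x * y ^ 3
    let q1 : ℝ → ℝ → ℝ → ℝ := fun x _ z => x - (1 / 3) * c22 * z
    let q2 : ℝ → ℝ → ℝ → ℝ := fun _ y z => y + (1 / 2) * c31 * z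
    let q3 : ℝ → ℝ → ℝ → ℝ := fun _ _ z => z
    let p : ℝ → ℝ → ℝ → ℝ := fun _ y z => 1 + c31 * y + (c04 + (1 / 4) * c31 ^ 2) * z
    (fun P : ℝ × ℝ =>
        q3 P.1 P.2 (g P.1 P.2) / p P.1 P.2 (g P.1 P.2)
          - f (q1 P.1 P.2 (g P.1 P.2) / p P.1 P.2 (g P.1 P.2))
              (q2 P.1 P.2 (g P.1 P.2) / p P.1 P.2 (g P.1 P.2)))
      =o[nhds (0 : ℝ × ℝ)] (fun P : ℝ × ℝ => ‖P‖ ^ 4) := by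
  intro f g q1 q2 q3 p
  have hpf0 : pf c40 c31 c13 c04 0 = 1 := by simp [pf]
  have hne : ∀ᶠ P : ℝ × ℝ in nhds 0, pf c40 c31 c13 c04 P ≠ 0 :=
    ((pf_cont c40 c31 c13 c04).continuousAt (x := 0)).eventually_ne
      (by rw [hpf0]; norm_num)
  have hNum : (fun P : ℝ × ℝ =>
      P.1 ^ 5 * P.2 ^ 0 * bA c40 c31 c22 c13 c04 P.1 P.2
      + P.1 ^ 4 * P.2 ^ 1 * bB c40 c31 c22 c13 c04 P.1 P.2
      + P.1 ^ 3 * P.2 ^ 2 * bC c40 c31 c22 c13 c04 P.1 P.2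
      + P.1 ^ 2 * P.2 ^ 3 * bD c40 c31 c22 c13 c04 P.1 P.2
      + P.1 ^ 1 * P.2 ^ 4 * bE c40 c31 c22 c13 c04 P.1 P.2
      + P.1 ^ 0 * P.2 ^ 5 * bF c40 c31 c22 c13 c04 P.1 P.2)
      =o[nhds (0 : ℝ × ℝ)] (fun P : ℝ × ℝ => ‖P‖ ^ 4) :=
    ((((((term_littleO 5 0 rfl (bA_cont c40 c31 c22 c13 c04)).add
      (term_littleO 4 1 rfl (bB_cont c40 c31 c22 c13 c04))).add
      (term_littleO 3 2 rfl (bC_cont c40 c31 c22 c13 c04))).add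
      (term_littleO 2 3 rfl (bD_cont c40 c31 c22 c13 c04))).add
      (term_littleO 1 4 rfl (bE_cont c40 c31 c22 c13 c04))).add
      (term_littleO 0 5 rfl (bF_cont c40 c31 c22 c13 c04)))
  have hInv : (fun P : ℝ × ℝ => (pf c40 c31 c13 c04 P ^ 4)⁻¹)
      =O[nhds (0 : ℝ × ℝ)] (fun _ => (1 : ℝ)) := by
    have ht : Filter.Tendsto (fun P : ℝ × ℝ => (pf c40 c31 c13 c04 P ^ 4)⁻¹)
        (nhds 0) (nhds ((pf c40 c31 c13 c04 0 ^ 4)⁻¹)) :=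
      (((pf_cont c40 c31 c13 c04).pow 4).tendsto 0).inv₀ (by rw [Pi.pow_apply, hpf0]; norm_num)
    exact ht.isBigO_one ℝ
  have key := hNum.mul_isBigO hInv
  simp only [mul_one] at key
  refine key.congr' ?_ (EventuallyEq.refl _ _)
  filter_upwards [hne] with P hP
  simp only [pf] at hP
  simp only [f, g, q1, q2, q3, p, pf]
  refine quot c40 c31 c22 c13 c04 _ _ _ _ _ hP ?_
  simp only [bA_0, bA_1, bA_2, bA_3, bA_4, bA, bB_0, bB_1, bB, bC_0, bC_1, bC_2, bC_3, bC, bD_0, bD_1, bD_2, bD_3, bD, bE_0, bE_1, bE_2, bE, bF_0, bF_1, bF_2, bF_3, bF_4, bF_5, bF_6, bF_7, bF_8, bF_9, bF_10, bF_11, bF]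
  ring
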